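/- Assume every triple (a, b, c) ∈ T has pairwise distinct entries. Then the betweenness instance (A, T) has a solution — i.e. there exists a linear order < on A such that for every (a, b, c) ∈ T either a < b < c or c < b < a — if and only if the grammar induction sample has a solution, i.e. there exist a word h_Y and, for each t = (a,b,c) ∈ T, words h_{t,1}, h_{t,2}, h_{t,3}, h_{t,4} over β × Bool such that the letter multiset of h_Y is y, those of h_{t,1} and h_{t,3} are c₁(t), that of h_{t,2} is c₂(t), that of h_{t,4} is c₄(t), and for every t ∈ T the concatenation h_Y ++ h_{t,1} ++ h_{t,2} ++ h_{t,3} ++ h_{t,4} reduces to the empty word (the same word h_Y being used in every sentence). (Mathematical core of the theorem that grammar induction from a compact closed category to a pivotal category is NP-complete, via reduction from the betweenness problem.) -/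

import Mathlib

/-- The subtyping relation on basic types `β = A ⊕ (A × A × A)`: `R g g'` holds iff
`g = x` for some `x : A`, `g' = d_t` for some triple `t = (a,b,c) ∈ T`, and `x = a` or
`x = c`. -/
def R {A : Type*} (T : Finset (A × A × A)) :
    (A ⊕ (A × A × A)) → (A ⊕ (A × A × A)) → Prop := fun g g' =>
  ∃ (x : A) (t : A × A × A), t ∈ T ∧ g = Sum.inl x ∧ g' = Sum.inr t ∧
    (x = t.1 ∨ x = t.2.2)

/-- One-step contraction of words over `β × Bool`: two adjacent letters
`(g, false), (g', true)` or `(g', true), (g, false)` cancel whenever `g = g'` or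
`R g g'`. -/
inductive Contract {A : Type*} (T : Finset (A × A × A)) :
    List ((A ⊕ (A × A × A)) × Bool) → List ((A ⊕ (A × A × A)) × Bool) → Prop
  | pos (u v : List ((A ⊕ (A × A × A)) × Bool)) (g g' : A ⊕ (A × A × A)) :
      (g = g' ∨ R T g g') → Contract T (u ++ [(g, false), (g', true)] ++ v) (u ++ v)
  | neg (u v : List ((A ⊕ (A × A × A)) × Bool)) (g g' : A ⊕ (A × A × A)) :
      (g = g' ∨ R T g g') → Contract T (u ++ [(g', true), (g, false)] ++ v) (u ++ v)

/-- A word reduces to the empty word if it is related to it by the reflexive-transitive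
closure of contraction. -/
def ReducesToNil {A : Type*} (T : Finset (A × A × A))
    (w : List ((A ⊕ (A × A × A)) × Bool)) : Prop :=
  Relation.ReflTransGen (Contract T) w []

/-- The semantic type `y`: one occurrence of `(x, false)` for each `x ∈ A`. -/
def yType (A : Type*) [Fintype A] : Multiset ((A ⊕ (A × A × A)) × Bool) :=
  (Finset.univ : Finset A).val.map fun x => ((Sum.inl x : A ⊕ (A × A × A)), false)

/-- The set `A \ {a, b, c}` for a triple `t = (a, b, c)`. -/
def wSet {A : Type*} [Fintype A] [DecidableEq A] (t : A × A × A) : Finset A :=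
  Finset.univ \ {t.1, t.2.1, t.2.2}

/-- One occurrence each of `(x, true)` and `(x, false)` for every `x ∈ A \ {a,b,c}`. -/
def wPart {A : Type*} [Fintype A] [DecidableEq A] (t : A × A × A) :
    Multiset ((A ⊕ (A × A × A)) × Bool) :=
  ((wSet t).val.map fun x => ((Sum.inl x : A ⊕ (A × A × A)), true)) +
    ((wSet t).val.map fun x => ((Sum.inl x : A ⊕ (A × A × A)), false))

/-- The semantic type `c₁(t) = d_t⁻¹ w⁻¹ w`. -/
def c1Type {A : Type*} [Fintype A] [DecidableEq A] (t : A × A × A) :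
    Multiset ((A ⊕ (A × A × A)) × Bool) :=
  ((Sum.inr t : A ⊕ (A × A × A)), true) ::ₘ wPart t

/-- The semantic type `c₂(t) = b⁻¹ w⁻¹ w`. -/
def c2Type {A : Type*} [Fintype A] [DecidableEq A] (t : A × A × A) :
    Multiset ((A ⊕ (A × A × A)) × Bool) :=
  ((Sum.inl t.2.1 : A ⊕ (A × A × A)), true) ::ₘ wPart t

/-- The semantic type `c₄(t) = w⁻¹`. -/
def c4Type {A : Type*} [Fintype A] [DecidableEq A] (t : A × A × A) :
    Multiset ((A ⊕ (A × A × A)) × Bool) :=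
  (wSet t).val.map fun x => ((Sum.inl x : A ⊕ (A × A × A)), true)



theorem prod_mid {α M : Type*} [Monoid M] (f : α → M) (u v : List α) (a b : α)
    (h : f a * f b = 1) :
    ((u ++ [a, b] ++ v).map f).prod = ((u ++ v).map f).prod := by
  simp only [List.map_append, List.prod_append, List.map_cons, List.map_nil, List.prod_cons,
    List.prod_nil, mul_one]
  rw [h, mul_one]

theorem prod_filter_of_ones {α M : Type*} [Monoid M] (f : α → M) (p : α → Bool) :
    ∀ l : List α, (∀ x ∈ l, p x = false → f x = 1) →
      ((l.filter p).map f).prod = (l.map f).prod := by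
  intro l
  induction l with
  | nil => intro; rfl
  | cons x l ih =>
    intro h
    have ih' := ih fun y hy => h y (List.mem_cons_of_mem _ hy)
    by_cases hx : p x
    · simp [List.filter_cons, hx, ih']
    · simp only [Bool.not_eq_true] at hx
      simp [List.filter_cons, hx, ih', h x (List.mem_cons_self) hx]

theorem prod_count_one {α M : Type*} [DecidableEq α] [Monoid M] (f : α → M) (a : α) :
    ∀ l : List α, (∀ x ∈ l, x ≠ a → f x = 1) →
      Multiset.count a (↑l : Multiset α) = 1 → (l.map f).prod = f a := by
  intro l
  induction l with
  | nil => intro _ h; simp at h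
  | cons x l ih =>
    intro h hc
    rw [← Multiset.cons_coe] at hc
    by_cases hx : x = a
    · subst hx
      rw [Multiset.count_cons_self] at hc
      have hl : Multiset.count x (↑l : Multiset α) = 0 := by omega
      rw [Multiset.count_eq_zero] at hl
      have : ∀ y ∈ l.map f, y = 1 := by
        intro y hy
        obtain ⟨z, hz, rfl⟩ := List.mem_map.1 hy
        exact h z (List.mem_cons_of_mem _ hz)
          (fun hzx => hl (Multiset.mem_coe.2 (hzx ▸ hz)))
      simp [List.prod_eq_one this]
    · have hc' : Multiset.count a (↑l : Multiset α) = 1 := by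
        rwa [Multiset.count_cons_of_ne (fun hax => hx hax.symm)] at hc
      simp [h x (List.mem_cons_self) hx, ih (fun y hy => h y (List.mem_cons_of_mem _ hy)) hc']

theorem pairwise_indexOf {A : Type*} [DecidableEq A] {s : List A} (h : s.Nodup) :
    s.Pairwise fun x y => s.idxOf x < s.idxOf y := by
  rw [List.pairwise_iff_getElem]
  intro i j hi hj hij
  rw [h.idxOf_getElem i hi, h.idxOf_getElem j hj]
  exact hij


namespace BetwAux

variable {A : Type*}

def flw (P : List A) : List ((A ⊕ (A × A × A)) × Bool) :=
  P.map fun x => ((Sum.inl x : A ⊕ (A × A × A)), false)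

def trw (P : List A) : List ((A ⊕ (A × A × A)) × Bool) :=
  P.map fun x => ((Sum.inl x : A ⊕ (A × A × A)), true)

theorem red_cancel (T : Finset (A × A × A)) (P : List A)
    (u v : List ((A ⊕ (A × A × A)) × Bool)) :
    Relation.ReflTransGen (Contract T) (u ++ (flw P ++ (trw P.reverse ++ v))) (u ++ v) := by
  induction P generalizing u v with
  | nil =>
    simp only [flw, trw, List.map_nil, List.reverse_nil, List.nil_append]
    exact Relation.ReflTransGen.refl
  | cons x P ih =>
    have step : Contract T (u ++ [((Sum.inl x : A ⊕ (A × A × A)), false),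
        ((Sum.inl x : A ⊕ (A × A × A)), true)] ++ v) (u ++ v) :=
      Contract.pos u v _ _ (Or.inl rfl)
    have ih' := ih (u ++ [((Sum.inl x : A ⊕ (A × A × A)), false)])
      ([((Sum.inl x : A ⊕ (A × A × A)), true)] ++ v)
    refine Relation.ReflTransGen.trans ?_ (Relation.ReflTransGen.single step)
    simp only [flw, trw, List.map_cons, List.map_append, List.map_nil, List.reverse_cons,
      List.append_assoc, List.cons_append, List.nil_append, List.singleton_append] at ih' ⊢
    exact ih'

theorem red_cancel' (T : Finset (A × A × A)) (P : List A)
    (u v w w' : List ((A ⊕ (A × A × A)) × Bool))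
    (hw : w = u ++ (flw P ++ (trw P.reverse ++ v))) (hw' : w' = u ++ v) :
    Relation.ReflTransGen (Contract T) w w' := by
  subst hw hw'; exact red_cancel T P u v

theorem red_pair' (T : Finset (A × A × A)) (x : A) (g' : A ⊕ (A × A × A))
    (h : (Sum.inl x : A ⊕ (A × A × A)) = g' ∨ R T (Sum.inl x) g')
    (u v w w' : List ((A ⊕ (A × A × A)) × Bool))
    (hw : w = u ++ (((Sum.inl x : A ⊕ (A × A × A)), false) :: ((g', true) :: v)))
    (hw' : w' = u ++ v) :
    Relation.ReflTransGen (Contract T) w w' := by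
  subst hw hw'
  exact Relation.ReflTransGen.single (by simpa using Contract.pos u v _ _ h)

def W1 (t : A × A × A) (L M1 M2 Rt : List A) : List ((A ⊕ (A × A × A)) × Bool) :=
  trw Rt.reverse ++ [((Sum.inr t : A ⊕ (A × A × A)), true)] ++ trw M2.reverse ++ flw L ++
    trw L.reverse ++ flw M1 ++ trw M1.reverse ++ flw M2 ++ flw Rt

def W2 (t : A × A × A) (L M1 M2 Rt : List A) : List ((A ⊕ (A × A × A)) × Bool) :=
  trw Rt.reverse ++ trw M2.reverse ++ [((Sum.inl t.2.1 : A ⊕ (A × A × A)), true)] ++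
    trw M1.reverse ++ flw L ++ trw L.reverse ++ flw M1 ++ flw M2 ++ flw Rt

def W3 (t : A × A × A) (L M1 M2 Rt : List A) : List ((A ⊕ (A × A × A)) × Bool) :=
  trw Rt.reverse ++ trw M2.reverse ++ trw M1.reverse ++
    [((Sum.inr t : A ⊕ (A × A × A)), true)] ++ trw L.reverse ++ flw L ++ flw M1 ++ flw M2 ++
    flw Rt

def W4 (L M1 M2 Rt : List A) : List ((A ⊕ (A × A × A)) × Bool) :=
  trw Rt.reverse ++ trw M2.reverse ++ trw M1.reverse ++ trw L.reverse

variable [Fintype A] [DecidableEq A]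

theorem wSet_val (t : A × A × A) (hd : t.1 ≠ t.2.1 ∧ t.1 ≠ t.2.2 ∧ t.2.1 ≠ t.2.2)
    (p q : A) (hpq : (p = t.1 ∧ q = t.2.2) ∨ (p = t.2.2 ∧ q = t.1))
    (s L M1 M2 Rt : List A)
    (hs : s = L ++ p :: (M1 ++ t.2.1 :: (M2 ++ q :: Rt)))
    (hsv : (↑s : Multiset A) = Finset.univ.val) :
    (wSet t).val = ↑L + ↑M1 + ↑M2 + ↑Rt := by
  have habc : ({t.1, t.2.1, t.2.2} : Finset A).val = (p ::ₘ t.2.1 ::ₘ {q} : Multiset A) := by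
    have h1 : t.1 ∉ ({t.2.1, t.2.2} : Finset A) := by simp [hd.1, hd.2.1]
    have h2 : t.2.1 ∉ ({t.2.2} : Finset A) := by simp [hd.2.2]
    rw [show ({t.1, t.2.1, t.2.2} : Finset A) = insert t.1 (insert t.2.1 {t.2.2}) from rfl,
      Finset.insert_val_of_notMem h1, Finset.insert_val_of_notMem h2]
    rcases hpq with ⟨hp, hq⟩ | ⟨hp, hq⟩
    · subst hp; subst hq; rfl
    · subst hp; subst hq
      rw [Finset.singleton_val]
      rw [Multiset.cons_swap t.1 t.2.1, Multiset.cons_swap t.2.2 t.2.1]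
      congr 1
      rw [show ({t.2.2} : Multiset A) = t.2.2 ::ₘ 0 from rfl,
        show ({t.1} : Multiset A) = t.1 ::ₘ 0 from rfl, Multiset.cons_swap]
  have hu : (Finset.univ : Finset A).val =
      (p ::ₘ t.2.1 ::ₘ {q} : Multiset A) + (↑L + ↑M1 + ↑M2 + ↑Rt) := by
    rw [← hsv, hs]
    simp only [← Multiset.cons_coe, ← Multiset.coe_add, ← Multiset.singleton_add]
    abel
  rw [wSet, Finset.sdiff_val, habc, hu, add_tsub_cancel_left]


theorem build (T : Finset (A × A × A)) (t : A × A × A) (ht : t ∈ T)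
    (hd : t.1 ≠ t.2.1 ∧ t.1 ≠ t.2.2 ∧ t.2.1 ≠ t.2.2)
    (p q : A) (hpq : (p = t.1 ∧ q = t.2.2) ∨ (p = t.2.2 ∧ q = t.1))
    (s L M1 M2 Rt : List A)
    (hs : s = L ++ p :: (M1 ++ t.2.1 :: (M2 ++ q :: Rt)))
    (hsv : (↑s : Multiset A) = Finset.univ.val) :
    (↑(W1 t L M1 M2 Rt) : Multiset ((A ⊕ (A × A × A)) × Bool)) = c1Type t ∧
    (↑(W2 t L M1 M2 Rt) : Multiset ((A ⊕ (A × A × A)) × Bool)) = c2Type t ∧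
    (↑(W3 t L M1 M2 Rt) : Multiset ((A ⊕ (A × A × A)) × Bool)) = c1Type t ∧
    (↑(W4 L M1 M2 Rt) : Multiset ((A ⊕ (A × A × A)) × Bool)) = c4Type t ∧
    ReducesToNil T (flw s ++ W1 t L M1 M2 Rt ++ W2 t L M1 M2 Rt ++ W3 t L M1 M2 Rt ++
      W4 L M1 M2 Rt) := by
  have hW := wSet_val t hd p q hpq s L M1 M2 Rt hs hsv
  have hpq' : p = t.1 ∨ p = t.2.2 := by tauto
  have hq' : q = t.1 ∨ q = t.2.2 := by tauto
  refine ⟨?_, ?_, ?_, ?_, ?_⟩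
  · simp only [W1, c1Type, wPart, hW, flw, trw, ← Multiset.cons_coe, ← Multiset.coe_add,
      ← Multiset.singleton_add, ← Multiset.map_coe, Multiset.coe_reverse, Multiset.map_add]
    abel
  · simp only [W2, c2Type, wPart, hW, flw, trw, ← Multiset.cons_coe, ← Multiset.coe_add,
      ← Multiset.singleton_add, ← Multiset.map_coe, Multiset.coe_reverse, Multiset.map_add]
    abel
  · simp only [W3, c1Type, wPart, hW, flw, trw, ← Multiset.cons_coe, ← Multiset.coe_add,
      ← Multiset.singleton_add, ← Multiset.map_coe, Multiset.coe_reverse, Multiset.map_add]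
    abel
  · simp only [W4, c4Type, wPart, hW, flw, trw, ← Multiset.cons_coe, ← Multiset.coe_add,
      ← Multiset.singleton_add, ← Multiset.map_coe, Multiset.coe_reverse, Multiset.map_add]
    abel
  · show Relation.ReflTransGen (Contract T) _ _
    have s1 : Relation.ReflTransGen (Contract T)
        (flw s ++ W1 t L M1 M2 Rt ++ W2 t L M1 M2 Rt ++ W3 t L M1 M2 Rt ++ W4 L M1 M2 Rt)
        (flw L ++ flw [p] ++ flw M1 ++ flw [t.2.1] ++ flw M2 ++ flw [q] ++ [((Sum.inr t : A ⊕ (A × A × A)), true)] ++ trw M2.reverse ++ flw L ++ trw L.reverse ++ flw M1 ++ trw M1.reverse ++ flw M2 ++ flw Rt ++ W2 t L M1 M2 Rt ++ W3 t L M1 M2 Rt ++ W4 L M1 M2 Rt) :=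
      red_cancel' T Rt (flw L ++ flw [p] ++ flw M1 ++ flw [t.2.1] ++ flw M2 ++ flw [q]) ([((Sum.inr t : A ⊕ (A × A × A)), true)] ++ trw M2.reverse ++ flw L ++ trw L.reverse ++ flw M1 ++ trw M1.reverse ++ flw M2 ++ flw Rt ++ W2 t L M1 M2 Rt ++ W3 t L M1 M2 Rt ++ W4 L M1 M2 Rt) _ _
        (by simp [hs, W1, W2, W3, W4, flw, trw]) (by simp [hs, W1, W2, W3, W4, flw, trw])
    have s2 : Relation.ReflTransGen (Contract T)
        (flw L ++ flw [p] ++ flw M1 ++ flw [t.2.1] ++ flw M2 ++ flw [q] ++ [((Sum.inr t : A ⊕ (A × A × A)), true)] ++ trw M2.reverse ++ flw L ++ trw L.reverse ++ flw M1 ++ trw M1.reverse ++ flw M2 ++ flw Rt ++ W2 t L M1 M2 Rt ++ W3 t L M1 M2 Rt ++ W4 L M1 M2 Rt)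
        (flw L ++ flw [p] ++ flw M1 ++ flw [t.2.1] ++ flw M2 ++ trw M2.reverse ++ flw L ++ trw L.reverse ++ flw M1 ++ trw M1.reverse ++ flw M2 ++ flw Rt ++ W2 t L M1 M2 Rt ++ W3 t L M1 M2 Rt ++ W4 L M1 M2 Rt) :=
      red_pair' T q (Sum.inr t) (Or.inr ⟨q, t, ht, rfl, rfl, hq'⟩) (flw L ++ flw [p] ++ flw M1 ++ flw [t.2.1] ++ flw M2) (trw M2.reverse ++ flw L ++ trw L.reverse ++ flw M1 ++ trw M1.reverse ++ flw M2 ++ flw Rt ++ W2 t L M1 M2 Rt ++ W3 t L M1 M2 Rt ++ W4 L M1 M2 Rt) _ _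
        (by simp [hs, W1, W2, W3, W4, flw, trw]) (by simp [hs, W1, W2, W3, W4, flw, trw])
    have s3 : Relation.ReflTransGen (Contract T)
        (flw L ++ flw [p] ++ flw M1 ++ flw [t.2.1] ++ flw M2 ++ trw M2.reverse ++ flw L ++ trw L.reverse ++ flw M1 ++ trw M1.reverse ++ flw M2 ++ flw Rt ++ W2 t L M1 M2 Rt ++ W3 t L M1 M2 Rt ++ W4 L M1 M2 Rt)
        (flw L ++ flw [p] ++ flw M1 ++ flw [t.2.1] ++ flw L ++ trw L.reverse ++ flw M1 ++ trw M1.reverse ++ flw M2 ++ flw Rt ++ W2 t L M1 M2 Rt ++ W3 t L M1 M2 Rt ++ W4 L M1 M2 Rt) :=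
      red_cancel' T M2 (flw L ++ flw [p] ++ flw M1 ++ flw [t.2.1]) (flw L ++ trw L.reverse ++ flw M1 ++ trw M1.reverse ++ flw M2 ++ flw Rt ++ W2 t L M1 M2 Rt ++ W3 t L M1 M2 Rt ++ W4 L M1 M2 Rt) _ _
        (by simp [hs, W1, W2, W3, W4, flw, trw]) (by simp [hs, W1, W2, W3, W4, flw, trw])
    have s4 : Relation.ReflTransGen (Contract T)
        (flw L ++ flw [p] ++ flw M1 ++ flw [t.2.1] ++ flw L ++ trw L.reverse ++ flw M1 ++ trw M1.reverse ++ flw M2 ++ flw Rt ++ W2 t L M1 M2 Rt ++ W3 t L M1 M2 Rt ++ W4 L M1 M2 Rt)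
        (flw L ++ flw [p] ++ flw M1 ++ flw [t.2.1] ++ flw M1 ++ trw M1.reverse ++ flw M2 ++ flw Rt ++ W2 t L M1 M2 Rt ++ W3 t L M1 M2 Rt ++ W4 L M1 M2 Rt) :=
      red_cancel' T L (flw L ++ flw [p] ++ flw M1 ++ flw [t.2.1]) (flw M1 ++ trw M1.reverse ++ flw M2 ++ flw Rt ++ W2 t L M1 M2 Rt ++ W3 t L M1 M2 Rt ++ W4 L M1 M2 Rt) _ _
        (by simp [hs, W1, W2, W3, W4, flw, trw]) (by simp [hs, W1, W2, W3, W4, flw, trw])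
    have s5 : Relation.ReflTransGen (Contract T)
        (flw L ++ flw [p] ++ flw M1 ++ flw [t.2.1] ++ flw M1 ++ trw M1.reverse ++ flw M2 ++ flw Rt ++ W2 t L M1 M2 Rt ++ W3 t L M1 M2 Rt ++ W4 L M1 M2 Rt)
        (flw L ++ flw [p] ++ flw M1 ++ flw [t.2.1] ++ flw M2 ++ flw Rt ++ W2 t L M1 M2 Rt ++ W3 t L M1 M2 Rt ++ W4 L M1 M2 Rt) :=
      red_cancel' T M1 (flw L ++ flw [p] ++ flw M1 ++ flw [t.2.1]) (flw M2 ++ flw Rt ++ W2 t L M1 M2 Rt ++ W3 t L M1 M2 Rt ++ W4 L M1 M2 Rt) _ _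
        (by simp [hs, W1, W2, W3, W4, flw, trw]) (by simp [hs, W1, W2, W3, W4, flw, trw])
    have s6 : Relation.ReflTransGen (Contract T)
        (flw L ++ flw [p] ++ flw M1 ++ flw [t.2.1] ++ flw M2 ++ flw Rt ++ W2 t L M1 M2 Rt ++ W3 t L M1 M2 Rt ++ W4 L M1 M2 Rt)
        (flw L ++ flw [p] ++ flw M1 ++ flw [t.2.1] ++ flw M2 ++ trw M2.reverse ++ [((Sum.inl t.2.1 : A ⊕ (A × A × A)), true)] ++ trw M1.reverse ++ flw L ++ trw L.reverse ++ flw M1 ++ flw M2 ++ flw Rt ++ W3 t L M1 M2 Rt ++ W4 L M1 M2 Rt) :=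
      red_cancel' T Rt (flw L ++ flw [p] ++ flw M1 ++ flw [t.2.1] ++ flw M2) (trw M2.reverse ++ [((Sum.inl t.2.1 : A ⊕ (A × A × A)), true)] ++ trw M1.reverse ++ flw L ++ trw L.reverse ++ flw M1 ++ flw M2 ++ flw Rt ++ W3 t L M1 M2 Rt ++ W4 L M1 M2 Rt) _ _
        (by simp [hs, W1, W2, W3, W4, flw, trw]) (by simp [hs, W1, W2, W3, W4, flw, trw])
    have s7 : Relation.ReflTransGen (Contract T)
        (flw L ++ flw [p] ++ flw M1 ++ flw [t.2.1] ++ flw M2 ++ trw M2.reverse ++ [((Sum.inl t.2.1 : A ⊕ (A × A × A)), true)] ++ trw M1.reverse ++ flw L ++ trw L.reverse ++ flw M1 ++ flw M2 ++ flw Rt ++ W3 t L M1 M2 Rt ++ W4 L M1 M2 Rt)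
        (flw L ++ flw [p] ++ flw M1 ++ flw [t.2.1] ++ [((Sum.inl t.2.1 : A ⊕ (A × A × A)), true)] ++ trw M1.reverse ++ flw L ++ trw L.reverse ++ flw M1 ++ flw M2 ++ flw Rt ++ W3 t L M1 M2 Rt ++ W4 L M1 M2 Rt) :=
      red_cancel' T M2 (flw L ++ flw [p] ++ flw M1 ++ flw [t.2.1]) ([((Sum.inl t.2.1 : A ⊕ (A × A × A)), true)] ++ trw M1.reverse ++ flw L ++ trw L.reverse ++ flw M1 ++ flw M2 ++ flw Rt ++ W3 t L M1 M2 Rt ++ W4 L M1 M2 Rt) _ _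
        (by simp [hs, W1, W2, W3, W4, flw, trw]) (by simp [hs, W1, W2, W3, W4, flw, trw])
    have s8 : Relation.ReflTransGen (Contract T)
        (flw L ++ flw [p] ++ flw M1 ++ flw [t.2.1] ++ [((Sum.inl t.2.1 : A ⊕ (A × A × A)), true)] ++ trw M1.reverse ++ flw L ++ trw L.reverse ++ flw M1 ++ flw M2 ++ flw Rt ++ W3 t L M1 M2 Rt ++ W4 L M1 M2 Rt)
        (flw L ++ flw [p] ++ flw M1 ++ trw M1.reverse ++ flw L ++ trw L.reverse ++ flw M1 ++ flw M2 ++ flw Rt ++ W3 t L M1 M2 Rt ++ W4 L M1 M2 Rt) :=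
      red_pair' T t.2.1 (Sum.inl t.2.1) (Or.inl rfl) (flw L ++ flw [p] ++ flw M1) (trw M1.reverse ++ flw L ++ trw L.reverse ++ flw M1 ++ flw M2 ++ flw Rt ++ W3 t L M1 M2 Rt ++ W4 L M1 M2 Rt) _ _
        (by simp [hs, W1, W2, W3, W4, flw, trw]) (by simp [hs, W1, W2, W3, W4, flw, trw])
    have s9 : Relation.ReflTransGen (Contract T)
        (flw L ++ flw [p] ++ flw M1 ++ trw M1.reverse ++ flw L ++ trw L.reverse ++ flw M1 ++ flw M2 ++ flw Rt ++ W3 t L M1 M2 Rt ++ W4 L M1 M2 Rt)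
        (flw L ++ flw [p] ++ flw L ++ trw L.reverse ++ flw M1 ++ flw M2 ++ flw Rt ++ W3 t L M1 M2 Rt ++ W4 L M1 M2 Rt) :=
      red_cancel' T M1 (flw L ++ flw [p]) (flw L ++ trw L.reverse ++ flw M1 ++ flw M2 ++ flw Rt ++ W3 t L M1 M2 Rt ++ W4 L M1 M2 Rt) _ _
        (by simp [hs, W1, W2, W3, W4, flw, trw]) (by simp [hs, W1, W2, W3, W4, flw, trw])
    have s10 : Relation.ReflTransGen (Contract T)
        (flw L ++ flw [p] ++ flw L ++ trw L.reverse ++ flw M1 ++ flw M2 ++ flw Rt ++ W3 t L M1 M2 Rt ++ W4 L M1 M2 Rt)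
        (flw L ++ flw [p] ++ flw M1 ++ flw M2 ++ flw Rt ++ W3 t L M1 M2 Rt ++ W4 L M1 M2 Rt) :=
      red_cancel' T L (flw L ++ flw [p]) (flw M1 ++ flw M2 ++ flw Rt ++ W3 t L M1 M2 Rt ++ W4 L M1 M2 Rt) _ _
        (by simp [hs, W1, W2, W3, W4, flw, trw]) (by simp [hs, W1, W2, W3, W4, flw, trw])
    have s11 : Relation.ReflTransGen (Contract T)
        (flw L ++ flw [p] ++ flw M1 ++ flw M2 ++ flw Rt ++ W3 t L M1 M2 Rt ++ W4 L M1 M2 Rt)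
        (flw L ++ flw [p] ++ flw M1 ++ flw M2 ++ trw M2.reverse ++ trw M1.reverse ++ [((Sum.inr t : A ⊕ (A × A × A)), true)] ++ trw L.reverse ++ flw L ++ flw M1 ++ flw M2 ++ flw Rt ++ W4 L M1 M2 Rt) :=
      red_cancel' T Rt (flw L ++ flw [p] ++ flw M1 ++ flw M2) (trw M2.reverse ++ trw M1.reverse ++ [((Sum.inr t : A ⊕ (A × A × A)), true)] ++ trw L.reverse ++ flw L ++ flw M1 ++ flw M2 ++ flw Rt ++ W4 L M1 M2 Rt) _ _
        (by simp [hs, W1, W2, W3, W4, flw, trw]) (by simp [hs, W1, W2, W3, W4, flw, trw])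
    have s12 : Relation.ReflTransGen (Contract T)
        (flw L ++ flw [p] ++ flw M1 ++ flw M2 ++ trw M2.reverse ++ trw M1.reverse ++ [((Sum.inr t : A ⊕ (A × A × A)), true)] ++ trw L.reverse ++ flw L ++ flw M1 ++ flw M2 ++ flw Rt ++ W4 L M1 M2 Rt)
        (flw L ++ flw [p] ++ flw M1 ++ trw M1.reverse ++ [((Sum.inr t : A ⊕ (A × A × A)), true)] ++ trw L.reverse ++ flw L ++ flw M1 ++ flw M2 ++ flw Rt ++ W4 L M1 M2 Rt) :=
      red_cancel' T M2 (flw L ++ flw [p] ++ flw M1) (trw M1.reverse ++ [((Sum.inr t : A ⊕ (A × A × A)), true)] ++ trw L.reverse ++ flw L ++ flw M1 ++ flw M2 ++ flw Rt ++ W4 L M1 M2 Rt) _ _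
        (by simp [hs, W1, W2, W3, W4, flw, trw]) (by simp [hs, W1, W2, W3, W4, flw, trw])
    have s13 : Relation.ReflTransGen (Contract T)
        (flw L ++ flw [p] ++ flw M1 ++ trw M1.reverse ++ [((Sum.inr t : A ⊕ (A × A × A)), true)] ++ trw L.reverse ++ flw L ++ flw M1 ++ flw M2 ++ flw Rt ++ W4 L M1 M2 Rt)
        (flw L ++ flw [p] ++ [((Sum.inr t : A ⊕ (A × A × A)), true)] ++ trw L.reverse ++ flw L ++ flw M1 ++ flw M2 ++ flw Rt ++ W4 L M1 M2 Rt) :=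
      red_cancel' T M1 (flw L ++ flw [p]) ([((Sum.inr t : A ⊕ (A × A × A)), true)] ++ trw L.reverse ++ flw L ++ flw M1 ++ flw M2 ++ flw Rt ++ W4 L M1 M2 Rt) _ _
        (by simp [hs, W1, W2, W3, W4, flw, trw]) (by simp [hs, W1, W2, W3, W4, flw, trw])
    have s14 : Relation.ReflTransGen (Contract T)
        (flw L ++ flw [p] ++ [((Sum.inr t : A ⊕ (A × A × A)), true)] ++ trw L.reverse ++ flw L ++ flw M1 ++ flw M2 ++ flw Rt ++ W4 L M1 M2 Rt)
        (flw L ++ trw L.reverse ++ flw L ++ flw M1 ++ flw M2 ++ flw Rt ++ W4 L M1 M2 Rt) :=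
      red_pair' T p (Sum.inr t) (Or.inr ⟨p, t, ht, rfl, rfl, hpq'⟩) (flw L) (trw L.reverse ++ flw L ++ flw M1 ++ flw M2 ++ flw Rt ++ W4 L M1 M2 Rt) _ _
        (by simp [hs, W1, W2, W3, W4, flw, trw]) (by simp [hs, W1, W2, W3, W4, flw, trw])
    have s15 : Relation.ReflTransGen (Contract T)
        (flw L ++ trw L.reverse ++ flw L ++ flw M1 ++ flw M2 ++ flw Rt ++ W4 L M1 M2 Rt)
        (flw L ++ flw M1 ++ flw M2 ++ flw Rt ++ W4 L M1 M2 Rt) :=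
      red_cancel' T L (([] : List ((A ⊕ (A × A × A)) × Bool))) (flw L ++ flw M1 ++ flw M2 ++ flw Rt ++ W4 L M1 M2 Rt) _ _
        (by simp [hs, W1, W2, W3, W4, flw, trw]) (by simp [hs, W1, W2, W3, W4, flw, trw])
    have s16 : Relation.ReflTransGen (Contract T)
        (flw L ++ flw M1 ++ flw M2 ++ flw Rt ++ W4 L M1 M2 Rt)
        (flw L ++ flw M1 ++ flw M2 ++ trw M2.reverse ++ trw M1.reverse ++ trw L.reverse) :=
      red_cancel' T Rt (flw L ++ flw M1 ++ flw M2) (trw M2.reverse ++ trw M1.reverse ++ trw L.reverse) _ _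
        (by simp [hs, W1, W2, W3, W4, flw, trw]) (by simp [hs, W1, W2, W3, W4, flw, trw])
    have s17 : Relation.ReflTransGen (Contract T)
        (flw L ++ flw M1 ++ flw M2 ++ trw M2.reverse ++ trw M1.reverse ++ trw L.reverse)
        (flw L ++ flw M1 ++ trw M1.reverse ++ trw L.reverse) :=
      red_cancel' T M2 (flw L ++ flw M1) (trw M1.reverse ++ trw L.reverse) _ _
        (by simp [hs, W1, W2, W3, W4, flw, trw]) (by simp [hs, W1, W2, W3, W4, flw, trw])
    have s18 : Relation.ReflTransGen (Contract T)
        (flw L ++ flw M1 ++ trw M1.reverse ++ trw L.reverse)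
        (flw L ++ trw L.reverse) :=
      red_cancel' T M1 (flw L) (trw L.reverse) _ _
        (by simp [hs, W1, W2, W3, W4, flw, trw]) (by simp [hs, W1, W2, W3, W4, flw, trw])
    have s19 : Relation.ReflTransGen (Contract T)
        (flw L ++ trw L.reverse)
        (([] : List ((A ⊕ (A × A × A)) × Bool))) :=
      red_cancel' T L (([] : List ((A ⊕ (A × A × A)) × Bool))) (([] : List ((A ⊕ (A × A × A)) × Bool))) _ _
        (by simp [hs, W1, W2, W3, W4, flw, trw]) (by simp [hs, W1, W2, W3, W4, flw, trw])
    exact Relation.ReflTransGen.trans s1 (Relation.ReflTransGen.trans s2 (Relation.ReflTransGen.trans s3 (Relation.ReflTransGen.trans s4 (Relation.ReflTransGen.trans s5 (Relation.ReflTransGen.trans s6 (Relation.ReflTransGen.trans s7 (Relation.ReflTransGen.trans s8 (Relation.ReflTransGen.trans s9 (Relation.ReflTransGen.trans s10 (Relation.ReflTransGen.trans s11 (Relation.ReflTransGen.trans s12 (Relation.ReflTransGen.trans s13 (Relation.ReflTransGen.trans s14 (Relation.ReflTransGen.trans s15 (Relation.ReflTransGen.trans s16 (Relation.ReflTransGen.trans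 s17 (Relation.ReflTransGen.trans s18 (s19))))))))))))))))))

end BetwAux

namespace BetwAux

theorem split3 {A : Type*} [LinearOrder A] {s : List A} (hs : s.Pairwise (· < ·))
    {p b q : A} (hp : p ∈ s) (hb : b ∈ s) (hq : q ∈ s) (hpb : p < b) (hbq : b < q) :
    ∃ L M1 M2 Rt, s = L ++ p :: (M1 ++ b :: (M2 ++ q :: Rt)) := by
  obtain ⟨u, v, rfl⟩ := List.append_of_mem hb
  rw [List.pairwise_append] at hs
  obtain ⟨hu, hbv, hcross⟩ := hs
  have hp' : p ∈ u := by
    rcases List.mem_append.1 hp with h | h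
    · exact h
    · rcases List.mem_cons.1 h with rfl | h
      · exact absurd hpb (lt_irrefl _)
      · exact absurd hpb (not_lt_of_gt ((List.pairwise_cons.1 hbv).1 _ h))
  have hq' : q ∈ v := by
    rcases List.mem_append.1 hq with h | h
    · exact absurd (hcross q h b (by simp)) (not_lt_of_gt hbq)
    · rcases List.mem_cons.1 h with rfl | h
      · exact absurd hbq (lt_irrefl _)
      · exact h
  obtain ⟨L, M1, rfl⟩ := List.append_of_mem hp'
  obtain ⟨M2, Rt, rfl⟩ := List.append_of_mem hq'
  exact ⟨L, M1, M2, Rt, by simp⟩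

theorem exists_list_of_shape {A : Type*} :
    ∀ l : List ((A ⊕ (A × A × A)) × Bool),
      (∀ p ∈ l, ∃ x : A, p = (Sum.inl x, false)) → ∃ s : List A, l = flw s := by
  intro l
  induction l with
  | nil => exact fun _ => ⟨[], rfl⟩
  | cons a l ih =>
    intro h
    obtain ⟨s, rfl⟩ := ih fun p hp => h p (List.mem_cons_of_mem _ hp)
    obtain ⟨x, rfl⟩ := h a (by simp)
    exact ⟨x :: s, rfl⟩

def phi0 {A : Type*} [DecidableEq A] (t : A × A × A) :
    (A ⊕ (A × A × A)) → Equiv.Perm (Fin 3)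
  | Sum.inl x =>
      if x = t.1 ∨ x = t.2.2 then Equiv.swap 0 1 else if x = t.2.1 then Equiv.swap 0 2 else 1
  | Sum.inr _ => Equiv.swap 0 1

end BetwAux

namespace BetwAux2

variable {A : Type*} {G : Type*} [Group G]

def phi (φ₀ : (A ⊕ (A × A × A)) → G) (l : (A ⊕ (A × A × A)) × Bool) : G :=
  if l.2 then (φ₀ l.1)⁻¹ else φ₀ l.1

theorem contract_prod {T : Finset (A × A × A)} {t : A × A × A}
    (φ₀ : (A ⊕ (A × A × A)) → G)
    (hφ : ∀ x : A, (x = t.1 ∨ x = t.2.2) → φ₀ (Sum.inl x) = φ₀ (Sum.inr t))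
    {w w' : List ((A ⊕ (A × A × A)) × Bool)} (hc : Contract T w w')
    (hg : ∀ l ∈ w, (∃ x : A, l.1 = Sum.inl x) ∨ l.1 = Sum.inr t) :
    ((w'.map (phi φ₀)).prod = (w.map (phi φ₀)).prod) ∧
      ∀ l ∈ w', (∃ x : A, l.1 = Sum.inl x) ∨ l.1 = Sum.inr t := by
  cases hc with
  | pos u v g g' h =>
    refine ⟨?_, fun l hl => hg l (by simp at hl ⊢; tauto)⟩
    refine (prod_mid _ u v _ _ ?_).symm
    rcases h with rfl | ⟨x, t'', ht'', rfl, rfl, hx⟩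
    · simp [phi]
    · have hgood := hg (Sum.inr t'', true) (by simp)
      have ht : t'' = t := by
        rcases hgood with ⟨x', hx'⟩ | h' <;> simp_all
      subst ht
      simp [phi, hφ x hx]
  | neg u v g g' h =>
    refine ⟨?_, fun l hl => hg l (by simp at hl ⊢; tauto)⟩
    refine (prod_mid _ u v _ _ ?_).symm
    rcases h with rfl | ⟨x, t'', ht'', rfl, rfl, hx⟩
    · simp [phi]
    · have hgood := hg (Sum.inr t'', true) (by simp)
      have ht : t'' = t := by
        rcases hgood with ⟨x', hx'⟩ | h' <;> simp_all
      subst ht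
      simp [phi, hφ x hx]

theorem red_prod {T : Finset (A × A × A)} {t : A × A × A}
    (φ₀ : (A ⊕ (A × A × A)) → G)
    (hφ : ∀ x : A, (x = t.1 ∨ x = t.2.2) → φ₀ (Sum.inl x) = φ₀ (Sum.inr t))
    {w : List ((A ⊕ (A × A × A)) × Bool)} (hw : ReducesToNil T w)
    (hg : ∀ l ∈ w, (∃ x : A, l.1 = Sum.inl x) ∨ l.1 = Sum.inr t) :
    (w.map (phi φ₀)).prod = 1 := by
  unfold ReducesToNil at hw
  induction hw using Relation.ReflTransGen.head_induction_on with
  | refl => simp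
  | head hstep hrest ih =>
    obtain ⟨hp, hgood⟩ := contract_prod φ₀ hφ hstep hg
    rw [← hp]
    exact ih hgood

end BetwAux2

/-- Mathematical core of NP-completeness of grammar induction from a compact closed
category to a pivotal category, via reduction from the betweenness problem: assuming
every triple of `T` has pairwise distinct entries, the betweenness instance `(A, T)` has
a solution iff the grammar induction sample has a solution. -/
theorem betweenness_iff_induction {A : Type*} [Fintype A] [DecidableEq A]
    (T : Finset (A × A × A))
    (hdist : ∀ t ∈ T, t.1 ≠ t.2.1 ∧ t.1 ≠ t.2.2 ∧ t.2.1 ≠ t.2.2) :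
    (∃ r : LinearOrder A, ∀ t ∈ T,
        (r.lt t.1 t.2.1 ∧ r.lt t.2.1 t.2.2) ∨ (r.lt t.2.2 t.2.1 ∧ r.lt t.2.1 t.1)) ↔
    (∃ (hY : List ((A ⊕ (A × A × A)) × Bool))
        (h1 h2 h3 h4 : (A × A × A) → List ((A ⊕ (A × A × A)) × Bool)),
      (↑hY : Multiset ((A ⊕ (A × A × A)) × Bool)) = yType A ∧
      ∀ t ∈ T,
        (↑(h1 t) : Multiset ((A ⊕ (A × A × A)) × Bool)) = c1Type t ∧
        (↑(h2 t) : Multiset ((A ⊕ (A × A × A)) × Bool)) = c2Type t ∧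
        (↑(h3 t) : Multiset ((A ⊕ (A × A × A)) × Bool)) = c1Type t ∧
        (↑(h4 t) : Multiset ((A ⊕ (A × A × A)) × Bool)) = c4Type t ∧
        ReducesToNil T (hY ++ h1 t ++ h2 t ++ h3 t ++ h4 t)) := by
  classical
  constructor
  · rintro ⟨r, hr⟩
    letI := r
    obtain ⟨s, hnd, hsv, hmem⟩ : ∃ s : List A, s.Pairwise (· < ·) ∧
        (↑s : Multiset A) = (Finset.univ : Finset A).val ∧ ∀ x : A, x ∈ s :=
      ⟨Finset.univ.sort (· ≤ ·), List.sortedLT_iff_pairwise.1 (Finset.sortedLT_sort _), Finset.sort_eq _ _,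
        fun x => (Finset.mem_sort _).2 (Finset.mem_univ x)⟩
    have key : ∀ t : A × A × A, ∃ w1 w2 w3 w4 : List ((A ⊕ (A × A × A)) × Bool),
        t ∈ T → ((↑w1 : Multiset ((A ⊕ (A × A × A)) × Bool)) = c1Type t ∧
          (↑w2 : Multiset ((A ⊕ (A × A × A)) × Bool)) = c2Type t ∧
          (↑w3 : Multiset ((A ⊕ (A × A × A)) × Bool)) = c1Type t ∧
          (↑w4 : Multiset ((A ⊕ (A × A × A)) × Bool)) = c4Type t ∧
          ReducesToNil T (BetwAux.flw s ++ w1 ++ w2 ++ w3 ++ w4)) := by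
      intro t
      by_cases ht : t ∈ T
      · obtain ⟨p, q, hpq, hpb, hbq⟩ : ∃ p q, ((p = t.1 ∧ q = t.2.2) ∨
            (p = t.2.2 ∧ q = t.1)) ∧ p < t.2.1 ∧ t.2.1 < q := by
          rcases hr t ht with ⟨ha, hb⟩ | ⟨ha, hb⟩
          · exact ⟨t.1, t.2.2, Or.inl ⟨rfl, rfl⟩, ha, hb⟩
          · exact ⟨t.2.2, t.1, Or.inr ⟨rfl, rfl⟩, ha, hb⟩
        obtain ⟨L, M1, M2, Rt, hs⟩ :=
          BetwAux.split3 hnd (hmem p) (hmem t.2.1) (hmem q) hpb hbq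
        obtain ⟨h1m, h2m, h3m, h4m, hred⟩ :=
          BetwAux.build T t ht (hdist t ht) p q hpq s L M1 M2 Rt hs hsv
        exact ⟨_, _, _, _, fun _ => ⟨h1m, h2m, h3m, h4m, hred⟩⟩
      · exact ⟨[], [], [], [], fun h => absurd h ht⟩
    choose f1 f2 f3 f4 hf using key
    refine ⟨BetwAux.flw s, f1, f2, f3, f4, ?_, ?_⟩
    · show (↑(List.map (fun x => ((Sum.inl x : A ⊕ (A × A × A)), false)) s) :
          Multiset ((A ⊕ (A × A × A)) × Bool)) = _
      rw [← Multiset.map_coe, hsv, yType]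
    · intro t ht
      exact hf t ht
  · rintro ⟨hY, h1, h2, h3, h4, hYm, hall⟩
    have hshape : ∀ p ∈ hY, ∃ x : A, p = (Sum.inl x, false) := by
      intro l hl
      have hl' : l ∈ yType A := by
        rw [← hYm]; exact Multiset.mem_coe.2 hl
      obtain ⟨x, _, hx⟩ := Multiset.mem_map.1 hl'
      exact ⟨x, hx.symm⟩
    obtain ⟨s, rfl⟩ := BetwAux.exists_list_of_shape hY hshape
    have hinj : Function.Injective
        (fun x : A => ((Sum.inl x : A ⊕ (A × A × A)), false)) := by
      intro x y hxy
      simpa using hxy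
    have hsv : (↑s : Multiset A) = (Finset.univ : Finset A).val := by
      apply Multiset.map_injective hinj
      rw [Multiset.map_coe]
      exact hYm
    have hnd : s.Nodup := by
      have := (Finset.univ : Finset A).nodup
      rw [← hsv] at this
      exact Multiset.coe_nodup.1 this
    have hmem : ∀ x : A, x ∈ s := by
      intro x
      have : x ∈ (↑s : Multiset A) := by rw [hsv]; exact Finset.mem_univ x
      exact Multiset.mem_coe.1 this
    have hinj2 : Function.Injective (fun x : A => s.idxOf x) := by
      intro x y h
      exact (List.idxOf_inj (hmem x)).1 h
    refine ⟨LinearOrder.lift' _ hinj2, ?_⟩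
    intro t ht
    have hlt : ∀ x y : A, (LinearOrder.lift' _ hinj2).lt x y ↔ s.idxOf x < s.idxOf y :=
      fun x y => Iff.rfl
    obtain ⟨h1m, h2m, h3m, h4m, hred⟩ := hall t ht
    obtain ⟨hab, hac, hbc⟩ := hdist t ht
    set δ : Equiv.Perm (Fin 3) := Equiv.swap 0 1 with hδ
    set βe : Equiv.Perm (Fin 3) := Equiv.swap 0 2 with hβ
    have hφ : ∀ x : A, (x = t.1 ∨ x = t.2.2) →
        BetwAux.phi0 t (Sum.inl x) = BetwAux.phi0 t (Sum.inr t) := by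
      intro x hx
      simp [BetwAux.phi0, hx]
    have hwp : ∀ m ∈ wPart t, ∃ x : A, (x ∈ wSet t) ∧ m.1 = Sum.inl x := by
      intro m hm
      rcases Multiset.mem_add.1 hm with h | h <;>
        · obtain ⟨x, hx, rfl⟩ := Multiset.mem_map.1 h
          exact ⟨x, hx, rfl⟩
    have hwne : ∀ x ∈ wSet t, ¬(x = t.1 ∨ x = t.2.1 ∨ x = t.2.2) := by
      intro x hx
      have := Finset.mem_sdiff.1 hx
      simpa using this.2
    have hgood : ∀ l ∈ BetwAux.flw s ++ h1 t ++ h2 t ++ h3 t ++ h4 t,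
        (∃ x : A, l.1 = Sum.inl x) ∨ l.1 = Sum.inr t := by
      intro l hl
      simp only [List.mem_append] at hl
      rcases hl with ((((hl | hl) | hl) | hl) | hl)
      · obtain ⟨x, _, rfl⟩ := List.mem_map.1 hl
        exact Or.inl ⟨x, rfl⟩
      · have : l ∈ c1Type t := by rw [← h1m]; exact Multiset.mem_coe.2 hl
        rcases Multiset.mem_cons.1 this with rfl | h
        · exact Or.inr rfl
        · obtain ⟨x, _, hx⟩ := hwp _ h; exact Or.inl ⟨x, hx⟩
      · have : l ∈ c2Type t := by rw [← h2m]; exact Multiset.mem_coe.2 hl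
        rcases Multiset.mem_cons.1 this with rfl | h
        · exact Or.inl ⟨t.2.1, rfl⟩
        · obtain ⟨x, _, hx⟩ := hwp _ h; exact Or.inl ⟨x, hx⟩
      · have : l ∈ c1Type t := by rw [← h3m]; exact Multiset.mem_coe.2 hl
        rcases Multiset.mem_cons.1 this with rfl | h
        · exact Or.inr rfl
        · obtain ⟨x, _, hx⟩ := hwp _ h; exact Or.inl ⟨x, hx⟩
      · have : l ∈ c4Type t := by rw [← h4m]; exact Multiset.mem_coe.2 hl
        obtain ⟨x, _, rfl⟩ := Multiset.mem_map.1 this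
        exact Or.inl ⟨x, rfl⟩
    have hprod := BetwAux2.red_prod (BetwAux.phi0 t) hφ hred hgood
    -- compute part products
    have hwone : ∀ m ∈ wPart t, BetwAux2.phi (BetwAux.phi0 t) m = 1 := by
      intro m hm
      obtain ⟨x, hx, hm1⟩ := hwp m hm
      have hne := hwne x hx
      rcases m with ⟨g, b⟩
      simp only at hm1
      subst hm1
      have hx1 : ¬(x = t.1 ∨ x = t.2.2) := fun h => hne (by tauto)
      have hx2 : ¬ x = t.2.1 := fun h => hne (Or.inr (Or.inl h))
      cases b <;> simp [BetwAux2.phi, BetwAux.phi0, hx1, hx2]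
    have hp1 : ∀ (hh : List ((A ⊕ (A × A × A)) × Bool)),
        (↑hh : Multiset ((A ⊕ (A × A × A)) × Bool)) = c1Type t →
        (hh.map (BetwAux2.phi (BetwAux.phi0 t))).prod = δ⁻¹ := by
      intro hh hhm
      have hcount : Multiset.count ((Sum.inr t : A ⊕ (A × A × A)), true)
          (↑hh : Multiset ((A ⊕ (A × A × A)) × Bool)) = 1 := by
        have h0 : Multiset.count ((Sum.inr t : A ⊕ (A × A × A)), true) (wPart t) = 0 := by
          rw [Multiset.count_eq_zero]
          intro hmm
          obtain ⟨x, _, hx⟩ := hwp _ hmm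
          simp at hx
        rw [hhm, c1Type, Multiset.count_cons_self, h0]
      have hones : ∀ m ∈ hh, m ≠ ((Sum.inr t : A ⊕ (A × A × A)), true) →
          BetwAux2.phi (BetwAux.phi0 t) m = 1 := by
        intro m hm hne
        have : m ∈ c1Type t := by rw [← hhm]; exact Multiset.mem_coe.2 hm
        rcases Multiset.mem_cons.1 this with rfl | h
        · exact absurd rfl hne
        · exact hwone m h
      rw [prod_count_one _ _ hh hones hcount]
      simp [BetwAux2.phi, BetwAux.phi0, hδ]
    have hp2 : ((h2 t).map (BetwAux2.phi (BetwAux.phi0 t))).prod = βe⁻¹ := by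
      have hcount : Multiset.count ((Sum.inl t.2.1 : A ⊕ (A × A × A)), true)
          (↑(h2 t) : Multiset ((A ⊕ (A × A × A)) × Bool)) = 1 := by
        have h0 : Multiset.count ((Sum.inl t.2.1 : A ⊕ (A × A × A)), true) (wPart t) = 0 := by
          rw [Multiset.count_eq_zero]
          intro hmm
          obtain ⟨x, hx, hx1⟩ := hwp _ hmm
          have : x = t.2.1 := by simpa using hx1.symm
          exact hwne x hx (Or.inr (Or.inl this))
        rw [h2m, c2Type, Multiset.count_cons_self, h0]
      have hones : ∀ m ∈ h2 t, m ≠ ((Sum.inl t.2.1 : A ⊕ (A × A × A)), true) →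
          BetwAux2.phi (BetwAux.phi0 t) m = 1 := by
        intro m hm hne
        have : m ∈ c2Type t := by rw [← h2m]; exact Multiset.mem_coe.2 hm
        rcases Multiset.mem_cons.1 this with rfl | h
        · exact absurd rfl hne
        · exact hwone m h
      rw [prod_count_one _ _ (h2 t) hones hcount]
      simp [BetwAux2.phi, BetwAux.phi0, Ne.symm hab, hbc, hβ]
    have hp4 : ((h4 t).map (BetwAux2.phi (BetwAux.phi0 t))).prod = 1 := by
      apply List.prod_eq_one
      intro y hy
      obtain ⟨m, hm, rfl⟩ := List.mem_map.1 hy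
      have : m ∈ c4Type t := by rw [← h4m]; exact Multiset.mem_coe.2 hm
      obtain ⟨x, hx, rfl⟩ := Multiset.mem_map.1 this
      have hne := hwne x hx
      have hx1 : ¬(x = t.1 ∨ x = t.2.2) := fun h => hne (by tauto)
      have hx2 : ¬ x = t.2.1 := fun h => hne (Or.inr (Or.inl h))
      simp [BetwAux2.phi, BetwAux.phi0, hx1, hx2]
    set fp : A → Bool := fun x => decide (x = t.1 ∨ x = t.2.1 ∨ x = t.2.2) with hfp
    set F : List A := s.filter fp with hFdef
    have hcond : ∀ x ∈ s, fp x = false → BetwAux.phi0 t (Sum.inl x) = 1 := by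
      intro x _ hx
      rw [hfp] at hx
      simp only [decide_eq_false_iff_not] at hx
      have hx1 : ¬(x = t.1 ∨ x = t.2.2) := fun h => hx (by tauto)
      have hx2 : ¬ x = t.2.1 := fun h => hx (Or.inr (Or.inl h))
      simp [BetwAux.phi0, hx1, hx2]
    have hYprod : ((BetwAux.flw s).map (BetwAux2.phi (BetwAux.phi0 t))).prod =
        (F.map (fun x => BetwAux.phi0 t (Sum.inl x))).prod := by
      rw [hFdef, prod_filter_of_ones _ _ s hcond]
      simp only [BetwAux.flw, List.map_map]
      apply congrArg
      apply List.map_congr_left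
      intro x _
      simp [BetwAux2.phi, Function.comp]
    have hFnd : F.Nodup := hnd.filter _
    have hFmem : ∀ x : A, x ∈ F ↔ (x = t.1 ∨ x = t.2.1 ∨ x = t.2.2) := by
      intro x
      simp [hFdef, List.mem_filter, hmem x, hfp]
    have hperm : F.Perm [t.1, t.2.1, t.2.2] := by
      rw [List.perm_ext_iff_of_nodup hFnd (by simp [hab, hac, hbc])]
      intro a
      simp [hFmem a]
    obtain ⟨u, v, w, hF⟩ := List.length_eq_three.1 (by simpa using hperm.length_eq)
    have hpw : F.Pairwise (fun x y => s.idxOf x < s.idxOf y) :=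
      (pairwise_indexOf hnd).sublist (List.filter_sublist (l := s))
    rw [hF] at hpw hperm hFnd hYprod
    have hne_uv : u ≠ v := fun h => by simp [h] at hFnd
    have hne_vw : v ≠ w := fun h => by simp [h] at hFnd
    have hne_uw : u ≠ w := fun h => by simp [h] at hFnd
    rw [List.pairwise_cons] at hpw
    obtain ⟨hpw1, hpw'⟩ := hpw
    rw [List.pairwise_cons] at hpw'
    obtain ⟨hpw2, _⟩ := hpw'
    have huv : s.idxOf u < s.idxOf v := hpw1 v (by simp)
    have hvw : s.idxOf v < s.idxOf w := hpw2 w (by simp)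
    have hmemuvw : ∀ x : A, x ∈ ([u, v, w] : List A) ↔
        (x = t.1 ∨ x = t.2.1 ∨ x = t.2.2) := by
      intro x
      rw [hperm.mem_iff]
      simp
    have hbmem : t.2.1 = u ∨ t.2.1 = v ∨ t.2.1 = w := by
      have := (hmemuvw t.2.1).2 (Or.inr (Or.inl rfl))
      simpa using this
    have hpsib : BetwAux.phi0 t (Sum.inl t.2.1) = βe := by
      simp [BetwAux.phi0, Ne.symm hab, hbc, hβ]
    have hpsio : ∀ x : A, x ∈ ([u, v, w] : List A) → x ≠ t.2.1 →
        BetwAux.phi0 t (Sum.inl x) = δ := by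
      intro x hxm hxb
      rcases (hmemuvw x).1 hxm with h | h | h
      · simp [BetwAux.phi0, h, hδ]
      · exact absurd h hxb
      · simp [BetwAux.phi0, h, hδ]
    rw [List.map_append, List.map_append, List.map_append, List.map_append,
      List.prod_append, List.prod_append, List.prod_append, List.prod_append,
      hYprod, hp1 (h1 t) h1m, hp2, hp1 (h3 t) h3m, hp4] at hprod
    simp only [List.map_cons, List.map_nil, List.prod_cons, List.prod_nil] at hprod
    rcases hbmem with hbu | hbv | hbw
    · exfalso
      rw [← hbu, hpsib, hpsio v (by simp) (fun h => hne_uv (hbu.symm.trans h.symm)),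
        hpsio w (by simp) (fun h => hne_uw (hbu.symm.trans h.symm)), hδ, hβ] at hprod
      revert hprod
      decide
    · have huB : u ≠ t.2.1 := fun h => hne_uv (h.trans hbv)
      have hwB : w ≠ t.2.1 := fun h => hne_vw (hbv.symm.trans h.symm)
      rcases (hmemuvw u).1 (by simp) with hu1 | hu1 | hu1
      · have hw1 : w = t.2.2 := by
          rcases (hmemuvw w).1 (by simp) with h | h | h
          · exact absurd (h.trans hu1.symm).symm hne_uw
          · exact absurd h hwB
          · exact h
        refine Or.inl ⟨?_, ?_⟩
        · exact (hlt t.1 t.2.1).2 (by rw [← hu1, hbv]; exact huv)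
        · exact (hlt t.2.1 t.2.2).2 (by rw [hbv, ← hw1]; exact hvw)
      · exact absurd hu1 huB
      · have hw1 : w = t.1 := by
          rcases (hmemuvw w).1 (by simp) with h | h | h
          · exact h
          · exact absurd h hwB
          · exact absurd (h.trans hu1.symm).symm hne_uw
        refine Or.inr ⟨?_, ?_⟩
        · exact (hlt t.2.2 t.2.1).2 (by rw [← hu1, hbv]; exact huv)
        · exact (hlt t.2.1 t.1).2 (by rw [hbv, ← hw1]; exact hvw)
    · exfalso
      rw [← hbw, hpsib, hpsio u (by simp) (fun h => hne_uw (h.trans hbw)),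
        hpsio v (by simp) (fun h => hne_vw (h.trans hbw)), hδ, hβ] at hprod
      revert hprod
      decide
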